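/- Let G be the set of marked binomials {m - m' : m a non-standard quadratic monomial of the form z_{σ,a} z_{γ,b} or x_i z_{σ,a}, m' its standard form}, with the non-standard monomial marked. Then G is marked coherently: there exists a term order ≤_α on R = S[z̄] such that in_{≤_α}(g) is the marked (non-standard) monomial for every g ∈ G. -/

import Mathlib

open MvPolynomial

noncomputable section

/-- Total degree of an exponent vector. -/
def expDeg (u : ℕ →₀ ℕ) : ℕ := u.sum fun _ e => e

/-- Degree lexicographic order induced by `x_1 > x_2 > ⋯` :
`DegLexLt u v` means the monomial with exponent `u` is strictly smaller than
the one with exponent `v`. -/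
def DegLexLt (u v : ℕ →₀ ℕ) : Prop :=
  expDeg u < expDeg v ∨ (expDeg u = expDeg v ∧ toLex u < toLex v)

/-- `u` is the exponent vector of the (unique, strictly largest) leading term of `f`
with respect to degree lexicographic order. -/
def IsLeadMono {K : Type*} [CommRing K] (f : MvPolynomial ℕ K) (u : ℕ →₀ ℕ) : Prop :=
  u ∈ f.support ∧ ∀ v ∈ f.support, v ≠ u → DegLexLt v u

/-- The initial ideal of `I` : the ideal generated by the leading monomials of
elements of `I`. -/
def initialIdeal {K : Type*} [CommRing K] (I : Ideal (MvPolynomial ℕ K)) :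
    Ideal (MvPolynomial ℕ K) :=
  Ideal.span {m | ∃ f ∈ I, ∃ u, IsLeadMono f u ∧ m = monomial u (1 : K)}

/-- `a 1, …, a r` is a chain (1-indexed strictly increasing sequence with gaps ≥ 2). -/
def IsChainOn (r : ℕ) (a : ℕ → ℕ) : Prop := ∀ i, 1 ≤ i → i < r → a i + 1 < a (i + 1)

/-- Exponent vector of the monomial `x_{a 1} ⋯ x_{a r}`. -/
def chainExp (r : ℕ) (a : ℕ → ℕ) : ℕ →₀ ℕ := ∑ i ∈ Finset.Icc 1 r, Finsupp.single (a i) 1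

/-- The maximal minor of a Hankel matrix whose main diagonal is `x_{a 1}, …, x_{a r}`;
its (i,j) entry (0-indexed) is `x_{a (j+1) + i - j}`. -/
def minorOfChain (K : Type*) [CommRing K] (r : ℕ) (a : ℕ → ℕ) : MvPolynomial ℕ K :=
  (Matrix.of fun i j : Fin r =>
    (X (a ((j : ℕ) + 1) + (i : ℕ) - (j : ℕ)) : MvPolynomial ℕ K)).det

/-- The chain `a` is the diagonal chain of a maximal minor of the Hankel matrix with
`r` rows built from the variables `x_lo, …, x_hi`. -/
def FitsHankel (lo hi r : ℕ) (a : ℕ → ℕ) : Prop :=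
  IsChainOn r a ∧ ∀ j, 1 ≤ j → j ≤ r → lo + (j - 1) ≤ a j ∧ a j + (r - j) ≤ hi

/-- The ideal of maximal minors of the Hankel matrix with `r` rows on `x_lo, …, x_hi`. -/
def hankelIdeal (K : Type*) [CommRing K] (lo hi r : ℕ) : Ideal (MvPolynomial ℕ K) :=
  Ideal.span {f | ∃ a : ℕ → ℕ, FitsHankel lo hi r a ∧ f = minorOfChain K r a}

/-- `Interval(a) = ⋃_{2 ≤ i ≤ r} {a_i - 1, a_i}`. -/
def IntervalOf (r : ℕ) (a : ℕ → ℕ) : Set ℕ :=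
  {x | ∃ i, 2 ≤ i ∧ i ≤ r ∧ (x = a i - 1 ∨ x = a i)}

/- Control functions with Δ = 0. -/
def omegaD (r s : ℕ) : ℕ := if r < s then r else s - 1
def omegaC (r s : ℕ) : ℕ := if r ≤ s then r else s
def omegaAD (r s : ℕ) : ℕ := if r ≤ s then r - 1 else s

/-- The three standard-form conditions for a pair of chains, with bounds
`d = Ω_d`, `c = Ω_c`, `ad = Ω_ad`. -/
def StdPairCond (d c ad r s : ℕ) (a b : ℕ → ℕ) : Prop :=
  ((∀ i, 1 ≤ i → i ≤ d → a i ≤ b (i + 1)) ∨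
    (∃ h, 1 ≤ h ∧ h ≤ d ∧ b (h + 1) < a h ∧
      ∀ i, h ≤ i → i ≤ d → a i ∈ IntervalOf s b)) ∧
  ((∀ i, 1 ≤ i → i ≤ c → a i ≤ b i) ∨
    (∃ h, 1 ≤ h ∧ h ≤ c ∧ b h < a h ∧
      ∀ i, h ≤ i → i ≤ c → a i ∈ IntervalOf s b)) ∧
  ((∀ i, 1 ≤ i → i ≤ ad → b i ≤ a (i + 1)) ∨
    (∃ h, 1 ≤ h ∧ h ≤ ad ∧ a (h + 1) < b h ∧
      ∀ i, h ≤ i → i ≤ ad → b i ∈ IntervalOf r a))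

/-- Standard form for a pair of (unlabeled) chains, with Δ = 0. -/
def StdPair (r s : ℕ) (a b : ℕ → ℕ) : Prop :=
  StdPairCond (omegaD r s) (omegaC r s) (omegaAD r s) r s a b

def HasDiagRel (r s : ℕ) (a b : ℕ → ℕ) : Prop :=
  ∃ h k, 1 ≤ h ∧ h ≤ omegaD r s ∧ h + 1 ≤ k ∧ k ≤ s ∧ b k < a h ∧ a h ∉ IntervalOf s b

def HasColRel (r s : ℕ) (a b : ℕ → ℕ) : Prop :=
  ∃ h, 1 ≤ h ∧ h ≤ omegaC r s ∧ b h < a h ∧ a h ∉ IntervalOf s b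

def HasADRel (r s : ℕ) (a b : ℕ → ℕ) : Prop :=
  ∃ h k, 1 ≤ h ∧ h ≤ omegaAD r s ∧ h + 1 ≤ k ∧ k ≤ r ∧ a k < b h ∧ b h ∉ IntervalOf r a

/-- A diagonal relation move (swap of a block of entries), with Ω_d bound `d`. -/
def DiagMoveP (d s : ℕ) (a b a' b' : ℕ → ℕ) : Prop :=
  ∃ h k v, 1 ≤ h ∧ h ≤ d ∧ h + 1 ≤ k ∧ k ≤ s ∧ b k < a h ∧ a h ∉ IntervalOf s b ∧
    v ≤ h - 1 ∧ (∀ i, i ≤ v → b (k - i) < a (h - i)) ∧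
    (v ≠ h - 1 → a (h - v - 1) ≤ b (k - v - 1)) ∧
    (∀ i, a' i = if h - v ≤ i ∧ i ≤ h then b (i + k - h) else a i) ∧
    (∀ i, b' i = if k - v ≤ i ∧ i ≤ k then a (i + h - k) else b i)

/-- A column-wise relation move, with Ω_c bound `c`. -/
def ColMoveP (c s : ℕ) (a b a' b' : ℕ → ℕ) : Prop :=
  ∃ h v, 1 ≤ h ∧ h ≤ c ∧ b h < a h ∧ a h ∉ IntervalOf s b ∧
    v ≤ h - 1 ∧ (∀ i, i ≤ v → b (h - i) < a (h - i)) ∧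
    (v ≠ h - 1 → a (h - v - 1) ≤ b (h - v - 1)) ∧
    (∀ i, a' i = if h - v ≤ i ∧ i ≤ h then b i else a i) ∧
    (∀ i, b' i = if h - v ≤ i ∧ i ≤ h then a i else b i)

/-- An anti-diagonal relation move, with Ω_ad bound `ad`. -/
def ADMoveP (ad r : ℕ) (a b a' b' : ℕ → ℕ) : Prop :=
  ∃ h k v, 1 ≤ h ∧ h ≤ ad ∧ h + 1 ≤ k ∧ k ≤ r ∧ a k < b h ∧ b h ∉ IntervalOf r a ∧
    v ≤ h - 1 ∧ (∀ i, i ≤ v → a (k - i) < b (h - i)) ∧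
    (v ≠ h - 1 → b (h - v - 1) ≤ a (k - v - 1)) ∧
    (∀ i, a' i = if k - v ≤ i ∧ i ≤ k then b (i + h - k) else a i) ∧
    (∀ i, b' i = if h - v ≤ i ∧ i ≤ h then a (i + k - h) else b i)

/-- A relation move on a pair of (unlabeled) chains (Δ = 0). -/
def Move (r s : ℕ) (a b a' b' : ℕ → ℕ) : Prop :=
  DiagMoveP (omegaD r s) s a b a' b' ∨ ColMoveP (omegaC r s) s a b a' b' ∨
    ADMoveP (omegaAD r s) r a b a' b'

/- Labels and labeled chains, for the family of close cuts. -/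
def IsLabel (n : ℕ) (σ : ℕ × ℕ) : Prop :=
  σ = (1, n) ∨ σ = (1, n - 1) ∨ σ = (2, n) ∨ σ = (2, n - 1)

def LabeledChain (n : ℕ) (σ : ℕ × ℕ) (r : ℕ) (a : ℕ → ℕ) : Prop :=
  IsLabel n σ ∧ 1 ≤ r ∧ FitsHankel σ.1 σ.2 r a

/-- Order of labels: (1,n-1) > (1,n) > (2,n-1) > (2,n). -/
def labelRank (n : ℕ) (σ : ℕ × ℕ) : ℕ :=
  if σ = (1, n - 1) then 3 else if σ = (1, n) then 2 else if σ = (2, n - 1) then 1 else 0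

/-- `(σ,a) ≥_c (γ,b)`. -/
def GeC (n : ℕ) (σ : ℕ × ℕ) (r : ℕ) (a : ℕ → ℕ) (γ : ℕ × ℕ) (s : ℕ) (b : ℕ → ℕ) : Prop :=
  labelRank n γ < labelRank n σ ∨
    (σ = γ ∧ (chainExp s b = chainExp r a ∨ DegLexLt (chainExp s b) (chainExp r a)))

/-- The function Δ for a pair of labeled chains. -/
def delta (n : ℕ) (σ γ : ℕ × ℕ) (r s : ℕ) (a b : ℕ → ℕ) : ℕ :=
  if (r ≤ s ∧ a r = n ∧ γ.2 = n - 1) ∨ (s < r ∧ b s = n ∧ σ.2 = n - 1) then 1 else 0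

def omegaD' (Δ r s : ℕ) : ℕ := if r < s then r - Δ else s - 1
def omegaC' (Δ r s : ℕ) : ℕ := if r ≤ s then r - Δ else s
def omegaAD' (Δ r s : ℕ) : ℕ := if r ≤ s then r - 1 else s - Δ

/-- Standard form for a pair of labeled chains `(σ,a) ≥_c (γ,b)`. -/
def StdPairL (n : ℕ) (σ γ : ℕ × ℕ) (r s : ℕ) (a b : ℕ → ℕ) : Prop :=
  StdPairCond (omegaD' (delta n σ γ r s a b) r s) (omegaC' (delta n σ γ r s a b) r s)
    (omegaAD' (delta n σ γ r s a b) r s) r s a b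

/-- A relation move on a pair of labeled chains (Δ as prescribed by the labels). -/
def MoveL (n : ℕ) (σ γ : ℕ × ℕ) (r s : ℕ) (a b a' b' : ℕ → ℕ) : Prop :=
  DiagMoveP (omegaD' (delta n σ γ r s a b) r s) s a b a' b' ∨
  ColMoveP (omegaC' (delta n σ γ r s a b) r s) s a b a' b' ∨
  ADMoveP (omegaAD' (delta n σ γ r s a b) r s) r a b a' b'

/-- A tabel with `l` rows: row `i` (1 ≤ i ≤ l) is the labeled chain
`(lab i, ent i)` of length `len i`, and the rows are ordered decreasingly by `≥_c`. -/
def IsTabel (n l : ℕ) (lab : ℕ → ℕ × ℕ) (len : ℕ → ℕ) (ent : ℕ → ℕ → ℕ) : Prop :=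
  (∀ i, 1 ≤ i → i ≤ l → LabeledChain n (lab i) (len i) (ent i)) ∧
  (∀ i, 1 ≤ i → i < l →
    GeC n (lab i) (len i) (ent i) (lab (i + 1)) (len (i + 1)) (ent (i + 1)))

/-- A tabel is a standard form: the standard-form conditions hold for each
pair of rows `i < j`. -/
def StdTabel (n l : ℕ) (lab : ℕ → ℕ × ℕ) (len : ℕ → ℕ) (ent : ℕ → ℕ → ℕ) : Prop :=
  ∀ i j, 1 ≤ i → i < j → j ≤ l →
    StdPairL n (lab i) (lab j) (len i) (len j) (ent i) (ent j)

/-- Standardness of a quadratic factor `x_i · z_{σ,a}` (condition (ii) of the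
standard-monomial construction). -/
def XZStd (i : ℕ) (σ : ℕ × ℕ) (r : ℕ) (a : ℕ → ℕ) : Prop :=
  i ≤ a 1 ∨ (a 1 < i ∧ (σ.2 < i ∨ i ∈ IntervalOf r a))

/-- Index type for the z-variables of `R = S[z̄]`: a label, a length, and a chain. -/
abbrev ZIdx : Type := (ℕ × ℕ) × ℕ × (ℕ → ℕ)

/-- Monomials of `R = S[z̄]` as pairs of exponent vectors (x-part, z-part),
written additively. -/
abbrev MonR : Type := (ℕ →₀ ℕ) × (ZIdx →₀ ℕ)

/-- The monomial `x_i` of `R`. -/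
def xMon (i : ℕ) : MonR := (Finsupp.single i 1, 0)

/-- The monomial `z_{σ,a}` of `R` (with `a` a chain of length `r`). -/
def zMon (σ : ℕ × ℕ) (r : ℕ) (a : ℕ → ℕ) : MonR := (0, Finsupp.single (σ, r, a) 1)

/-- One reduction step for a non-standard factor `x_i · z_{σ,a}`: replace `x_i` by
`x_{a t}` and `a t` by `i`, where `a t < i ≤ a (t+1)` (or `a r < i ≤ σ₂`). -/
def XZMove (σ : ℕ × ℕ) (r : ℕ) (p q : ℕ × (ℕ → ℕ)) : Prop :=
  ∃ t, 1 ≤ t ∧ t ≤ r ∧ p.2 t < p.1 ∧ (t = r → p.1 ≤ σ.2) ∧ (t < r → p.1 ≤ p.2 (t + 1)) ∧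
    q.1 = p.2 t ∧ ∀ i, q.2 i = if i = t then p.1 else p.2 i

/-! ### Auxiliary material for the proof of `stmt15` -/

namespace Stmt15Aux

open Finsupp

/-- A copy of `ZIdx` carrying (only) a well-ordering as its order structure. -/
def ZK : Type := ZIdx

noncomputable instance : LinearOrder ZK := IsWellOrder.linearOrder WellOrderingRel

/-- Transport of `z`-exponent vectors to the well-ordered copy of the index type. -/
def zk : (ZIdx →₀ ℕ) ≃+ (ZK →₀ ℕ) := Finsupp.domCongr (Equiv.cast rfl)

/-- Integer sum of the entries of a chain. -/
def entS (r : ℕ) (u : ℕ → ℕ) : ℤ := ∑ i ∈ Finset.Icc 1 r, (u i : ℤ)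

/-- Position-weighted sum of the entries of a chain. -/
def posS (r : ℕ) (u : ℕ → ℕ) : ℤ := ∑ i ∈ Finset.Icc 1 r, (i : ℤ) * (u i : ℤ)

/-- Tail sum of the entries of a chain. -/
def tailS (r j : ℕ) (u : ℕ → ℕ) : ℤ := ∑ i ∈ Finset.Icc (j + 1) r, (u i : ℤ)

/-- The correlation weight vector of a chain. -/
def vW (r : ℕ) (u : ℕ → ℕ) : ℕ →₀ ℤ :=
  ∑ j ∈ Finset.Icc 1 r, Finsupp.single (5 + j) (-((u j : ℤ) * tailS r j u))

/-- Weight vector of a `z`-variable. -/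
def gz (n : ℕ) (v : ZIdx) : ℕ →₀ ℤ :=
  Finsupp.single 0 1 + Finsupp.single 2 (-(posS v.2.1 v.2.2))
    + Finsupp.single 3 ((labelRank n v.1 : ℤ) * entS v.2.1 v.2.2)
    + Finsupp.single 4 ((v.2.1 : ℤ) * entS v.2.1 v.2.2)
    + vW v.2.1 v.2.2

/-- Weight vector of an `x`-variable. -/
def gx (i : ℕ) : ℕ →₀ ℤ := Finsupp.single 0 1 + Finsupp.single 1 (i : ℤ)

/-- Total weight vector of a monomial of `R`. -/
def G (n : ℕ) (p : MonR) : ℕ →₀ ℤ :=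
  p.1.sum (fun i e => (e : ℤ) • gx i) + p.2.sum (fun v e => (e : ℤ) • gz n v)

lemma vW_apply_le5 (r : ℕ) (u : ℕ → ℕ) (c : ℕ) (hc : c ≤ 5) : vW r u c = 0 := by
  rw [vW, Finsupp.finset_sum_apply]
  refine Finset.sum_eq_zero fun j hj => ?_
  rw [Finsupp.single_apply, if_neg]
  simp only [Finset.mem_Icc] at hj
  omega

lemma vW_apply (r : ℕ) (u : ℕ → ℕ) (j : ℕ) :
    vW r u (5 + j) = if 1 ≤ j ∧ j ≤ r then -((u j : ℤ) * tailS r j u) else 0 := by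
  rw [vW, Finsupp.finset_sum_apply]
  have : ∀ j' ∈ Finset.Icc 1 r,
      (Finsupp.single (5 + j') (-((u j' : ℤ) * tailS r j' u))) (5 + j)
        = if j' = j then -((u j' : ℤ) * tailS r j' u) else 0 := by
    intro j' _
    rw [Finsupp.single_apply]
    congr 1
    simp only [eq_iff_iff]
    omega
  rw [Finset.sum_congr rfl this, Finset.sum_ite_eq']
  simp [Finset.mem_Icc]

lemma gz_apply0 (n : ℕ) (v : ZIdx) : gz n v 0 = 1 := by
  simp [gz, Finsupp.single_apply, vW_apply_le5]

lemma gz_apply1 (n : ℕ) (v : ZIdx) : gz n v 1 = 0 := by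
  simp [gz, Finsupp.single_apply, vW_apply_le5]

lemma gz_apply2 (n : ℕ) (v : ZIdx) : gz n v 2 = -(posS v.2.1 v.2.2) := by
  simp [gz, Finsupp.single_apply, vW_apply_le5]

lemma gz_apply3 (n : ℕ) (v : ZIdx) :
    gz n v 3 = (labelRank n v.1 : ℤ) * entS v.2.1 v.2.2 := by
  simp [gz, Finsupp.single_apply, vW_apply_le5]

lemma gz_apply4 (n : ℕ) (v : ZIdx) :
    gz n v 4 = (v.2.1 : ℤ) * entS v.2.1 v.2.2 := by
  simp [gz, Finsupp.single_apply, vW_apply_le5]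

lemma gz_apply5j (n : ℕ) (v : ZIdx) (j : ℕ) :
    gz n v (5 + j)
      = if 1 ≤ j ∧ j ≤ v.2.1 then -((v.2.2 j : ℤ) * tailS v.2.1 j v.2.2) else 0 := by
  have h5 : ∀ c : ℤ, ∀ m : ℕ, m ≤ 4 → (Finsupp.single m c : ℕ →₀ ℤ) (5 + j) = 0 := by
    intro c m hm
    rw [Finsupp.single_apply, if_neg]
    omega
  simp only [gz, Finsupp.add_apply, vW_apply, h5 _ 0 (by norm_num), h5 _ 2 (by norm_num),
    h5 _ 3 (by norm_num), h5 _ 4 (by norm_num)]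
  ring

lemma gx_apply0 (i : ℕ) : gx i 0 = 1 := by simp [gx, Finsupp.single_apply]

lemma gx_apply1 (i : ℕ) : gx i 1 = (i : ℤ) := by simp [gx, Finsupp.single_apply]

lemma G_zero (n : ℕ) : G n 0 = 0 := by simp [G]

lemma G_xz (n : ℕ) (i : ℕ) (σ : ℕ × ℕ) (r : ℕ) (a : ℕ → ℕ) :
    G n (xMon i + zMon σ r a) = gx i + gz n (σ, r, a) := by
  have h1 : (xMon i + zMon σ r a).1 = Finsupp.single i 1 := by
    simp [xMon, zMon]
  have h2 : (xMon i + zMon σ r a).2 = Finsupp.single (σ, r, a) 1 := by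
    simp [xMon, zMon]
  rw [G, h1, h2, Finsupp.sum_single_index, Finsupp.sum_single_index] <;> simp

lemma G_zz (n : ℕ) (σ γ : ℕ × ℕ) (r s : ℕ) (a b : ℕ → ℕ) :
    G n (zMon σ r a + zMon γ s b) = gz n (σ, r, a) + gz n (γ, s, b) := by
  have h1 : (zMon σ r a + zMon γ s b).1 = 0 := by simp [zMon]
  have h2 : (zMon σ r a + zMon γ s b).2
      = Finsupp.single ((σ, r, a) : ZIdx) 1 + Finsupp.single ((γ, s, b) : ZIdx) 1 := by
    simp [zMon]
  rw [G, h1, h2, Finsupp.sum_zero_index, Finsupp.sum_add_index', Finsupp.sum_single_index,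
    Finsupp.sum_single_index] <;> simp [add_smul]

lemma G_add (n : ℕ) (p q : MonR) : G n (p + q) = G n p + G n q := by
  have hz : ∀ i : ℕ, ((0 : ℕ) : ℤ) • gx i = 0 := by simp
  have hz' : ∀ v : ZIdx, ((0 : ℕ) : ℤ) • gz n v = 0 := by simp
  rw [G, G, G]
  have e1 : (p + q).1 = p.1 + q.1 := rfl
  have e2 : (p + q).2 = p.2 + q.2 := rfl
  rw [e1, e2, Finsupp.sum_add_index' (fun i => hz i) (by intro i b c; push_cast; rw [add_smul]),
    Finsupp.sum_add_index' (fun v => hz' v) (by intro v b c; push_cast; rw [add_smul])]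
  abel

end Stmt15Aux
namespace Stmt15Aux

open Finsupp

/-- The target linearly ordered type of the order-embedding. -/
abbrev TT : Type := Lex ((Lex (ℕ →₀ ℤ)) × Lex ((Lex (ℕ →₀ ℕ)) × (Lex (ZK →₀ ℕ))))

/-- The order-embedding defining the term order. -/
noncomputable def phi (n : ℕ) (p : MonR) : TT :=
  toLex (toLex (G n p), toLex (toLex p.1, toLex (zk p.2)))

/-- The term order itself. -/
def LTm (n : ℕ) (p q : MonR) : Prop := phi n p < phi n q

lemma phi_inj (n : ℕ) : Function.Injective (phi n) := by
  intro p q h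
  unfold phi at h
  simp only [toLex_inj, Prod.mk.injEq] at h
  exact Prod.ext h.2.1 (zk.injective h.2.2)

lemma LTm_sto (n : ℕ) : IsStrictTotalOrder MonR (LTm n) where
  trichotomous p q := by
    rcases lt_trichotomy (phi n p) (phi n q) with h | h | h
    · intro h1; exact absurd h h1
    · intro _ _; exact phi_inj n h
    · intro _ h2; exact absurd h h2
  irrefl p h := lt_irrefl (phi n p) h
  trans p q u h1 h2 := by
    have h1' : phi n p < phi n q := h1
    have h2' : phi n q < phi n u := h2
    exact lt_trans h1' h2'

lemma sum_cast_nonneg {α : Type*} (f : α →₀ ℕ) : 0 ≤ f.sum fun _ e => (e : ℤ) :=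
  Finset.sum_nonneg fun i _ => by positivity

lemma sum_cast_pos {α : Type*} (f : α →₀ ℕ) (hf : f ≠ 0) :
    0 < f.sum fun _ e => (e : ℤ) := by
  obtain ⟨i, hi⟩ : ∃ i, f i ≠ 0 := by
    by_contra h
    push_neg at h
    exact hf (Finsupp.ext fun i => h i)
  have hmem : i ∈ f.support := Finsupp.mem_support_iff.mpr hi
  refine Finset.sum_pos' (fun j _ => by positivity) ⟨i, hmem, ?_⟩
  show (0 : ℤ) < (f i : ℤ)
  exact_mod_cast Nat.pos_of_ne_zero hi

lemma G_apply0 (n : ℕ) (p : MonR) :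
    G n p 0 = (p.1.sum fun _ e => (e : ℤ)) + (p.2.sum fun _ e => (e : ℤ)) := by
  rw [G, Finsupp.add_apply, Finsupp.sum_apply, Finsupp.sum_apply]
  congr 1
  · refine Finset.sum_congr rfl fun i _ => ?_
    show ((p.1 i : ℤ) • gx i) 0 = (p.1 i : ℤ)
    rw [Finsupp.smul_apply, gx_apply0, smul_eq_mul, mul_one]
  · refine Finset.sum_congr rfl fun v _ => ?_
    show ((p.2 v : ℤ) • gz n v) 0 = (p.2 v : ℤ)
    rw [Finsupp.smul_apply, gz_apply0, smul_eq_mul, mul_one]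

/-- basic lex-lt constructor in `Lex (ℕ →₀ ℤ)`. -/
lemma lexlt_of {u v : ℕ →₀ ℤ} (i : ℕ) (hbelow : ∀ j, j < i → u j = v j) (hlt : u i < v i) :
    toLex u < toLex v :=
  Finsupp.Lex.lt_iff.mpr ⟨i, hbelow, hlt⟩

lemma LTm_zero_lt (n : ℕ) (m : MonR) (hm : m ≠ 0) : LTm n 0 m := by
  unfold LTm phi
  rw [Prod.Lex.lt_iff]
  left
  rw [G_zero]
  refine lexlt_of 0 (fun j hj => absurd hj (Nat.not_lt_zero j)) ?_
  rw [Finsupp.coe_zero, Pi.zero_apply, G_apply0]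
  rcases (by
    by_contra h
    push_neg at h
    exact hm (Prod.ext h.1 h.2) : m.1 ≠ 0 ∨ m.2 ≠ 0) with h | h
  · have := sum_cast_pos m.1 h
    have := sum_cast_nonneg m.2
    linarith
  · have := sum_cast_pos m.2 h
    have := sum_cast_nonneg m.1
    linarith

lemma lexlt_add_nat {α : Type*} [LinearOrder α] {u v : α →₀ ℕ} (w : α →₀ ℕ)
    (h : toLex u < toLex v) : toLex (u + w) < toLex (v + w) := by
  obtain ⟨i, hb, hl⟩ := Finsupp.Lex.lt_iff.mp h
  refine Finsupp.Lex.lt_iff.mpr ⟨i, fun j hj => ?_, ?_⟩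
  · have := hb j hj
    simp only [ofLex_toLex] at this ⊢
    simp [Finsupp.add_apply, this]
  · simp only [ofLex_toLex] at hl ⊢
    simp only [Finsupp.add_apply]
    omega

lemma LTm_add (n : ℕ) (p q w : MonR) (h : LTm n p q) : LTm n (p + w) (q + w) := by
  unfold LTm phi at h ⊢
  rw [Prod.Lex.lt_iff] at h ⊢
  rcases h with h | ⟨he, h⟩
  · left
    show toLex (G n (p + w)) < toLex (G n (q + w))
    rw [G_add, G_add]
    exact add_lt_add_of_lt_of_le h le_rfl
  · have he' : toLex (G n p) = toLex (G n q) := he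
    rw [toLex_inj] at he'
    have h' : toLex (toLex p.1, toLex (zk p.2)) < toLex (toLex q.1, toLex (zk q.2)) := h
    right
    constructor
    · show toLex (G n (p + w)) = toLex (G n (q + w))
      rw [G_add, G_add, he']
    · show toLex (toLex (p + w).1, toLex (zk (p + w).2)) < toLex (toLex (q + w).1, toLex (zk (q + w).2))
      rw [Prod.Lex.lt_iff] at h' ⊢
      rcases h' with h' | ⟨he2, h'⟩
      · left
        exact lexlt_add_nat w.1 h'
      · have he2' : toLex p.1 = toLex q.1 := he2
        rw [toLex_inj] at he2'
        have h2 : toLex (zk p.2) < toLex (zk q.2) := h'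
        right
        refine ⟨?_, ?_⟩
        · show toLex (p.1 + w.1) = toLex (q.1 + w.1)
          rw [he2']
        · show toLex (zk ((p + w).2)) < toLex (zk ((q + w).2))
          have e1 : zk ((p + w).2) = zk p.2 + zk w.2 := map_add zk p.2 w.2
          have e2 : zk ((q + w).2) = zk q.2 + zk w.2 := map_add zk q.2 w.2
          rw [e1, e2]
          exact lexlt_add_nat (zk w.2) h2

end Stmt15Aux
namespace Stmt15Aux

lemma sum_block {A r lo hi : ℕ} (hA : A ≤ lo) (hr : hi ≤ r)
    (F : ℕ → ℕ → ℤ) (u g u' : ℕ → ℕ)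
    (hu' : ∀ i, u' i = if lo ≤ i ∧ i ≤ hi then g i else u i) :
    ∑ i ∈ Finset.Icc A r, F i (u' i)
      = (∑ i ∈ Finset.Icc A r, F i (u i))
        + ∑ i ∈ Finset.Icc lo hi, (F i (g i) - F i (u i)) := by
  have hsub : Finset.Icc lo hi ⊆ Finset.Icc A r := by
    intro i hi'
    simp only [Finset.mem_Icc] at hi' ⊢
    omega
  have key : ∑ i ∈ Finset.Icc A r, (F i (u' i) - F i (u i))
      = ∑ i ∈ Finset.Icc lo hi, (F i (g i) - F i (u i)) := by
    rw [← Finset.sum_subset hsub]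
    · refine Finset.sum_congr rfl fun i hi' => ?_
      simp only [Finset.mem_Icc] at hi'
      rw [hu' i, if_pos hi']
    · intro i _ hnot
      simp only [Finset.mem_Icc] at hnot
      rw [hu' i, if_neg hnot, sub_self]
  rw [← key, Finset.sum_sub_distrib]
  ring

lemma sum_shift (lo hi c : ℕ) (F : ℕ → ℤ) :
    ∑ i ∈ Finset.Icc (lo + c) (hi + c), F i = ∑ j ∈ Finset.Icc lo hi, F (j + c) := by
  rw [← Finset.map_add_right_Icc, Finset.sum_map]
  rfl

/-- The amount transferred by a column move. -/
def colE (h v : ℕ) (a b : ℕ → ℕ) : ℤ := ∑ i ∈ Finset.Icc (h - v) h, ((a i : ℤ) - (b i : ℤ))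

section ColMove

variable {r s h v : ℕ} {a b a' b' : ℕ → ℕ}

lemma col_posS (hh : 1 ≤ h) (hv : v ≤ h - 1) (hhr : h ≤ r) (hhs : h ≤ s)
    (ha' : ∀ i, a' i = if h - v ≤ i ∧ i ≤ h then b i else a i)
    (hb' : ∀ i, b' i = if h - v ≤ i ∧ i ≤ h then a i else b i) :
    posS r a' + posS s b' = posS r a + posS s b := by
  have e1 := sum_block (A := 1) (r := r) (lo := h - v) (hi := h) (by omega) hhr
    (fun i x => (i : ℤ) * x) a b a' ha'
  have e2 := sum_block (A := 1) (r := s) (lo := h - v) (hi := h) (by omega) hhs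
    (fun i x => (i : ℤ) * x) b a b' hb'
  have hz : (∑ i ∈ Finset.Icc (h - v) h, ((i : ℤ) * (b i : ℤ) - (i : ℤ) * (a i : ℤ)))
      + (∑ i ∈ Finset.Icc (h - v) h, ((i : ℤ) * (a i : ℤ) - (i : ℤ) * (b i : ℤ))) = 0 := by
    rw [← Finset.sum_add_distrib]
    exact Finset.sum_eq_zero fun i _ => by ring
  unfold posS
  rw [e1, e2]
  linarith

lemma col_entS_a (hh : 1 ≤ h) (hv : v ≤ h - 1) (hhr : h ≤ r)
    (ha' : ∀ i, a' i = if h - v ≤ i ∧ i ≤ h then b i else a i) :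
    entS r a' = entS r a - colE h v a b := by
  have e1 := sum_block (A := 1) (r := r) (lo := h - v) (hi := h) (by omega) hhr
    (fun _ x => (x : ℤ)) a b a' ha'
  have hz : (∑ i ∈ Finset.Icc (h - v) h, ((b i : ℤ) - (a i : ℤ)))
      = - colE h v a b := by
    unfold colE
    rw [← Finset.sum_neg_distrib]
    exact Finset.sum_congr rfl fun i _ => by ring
  unfold entS
  rw [e1]
  linarith

lemma col_entS_b (hh : 1 ≤ h) (hv : v ≤ h - 1) (hhs : h ≤ s)
    (hb' : ∀ i, b' i = if h - v ≤ i ∧ i ≤ h then a i else b i) :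
    entS s b' = entS s b + colE h v a b := by
  have e2 := sum_block (A := 1) (r := s) (lo := h - v) (hi := h) (by omega) hhs
    (fun _ x => (x : ℤ)) b a b' hb'
  unfold entS colE
  rw [e2]

lemma col_tailS_a (hhr : h ≤ r) (j : ℕ) (hj : j + 1 ≤ h - v)
    (ha' : ∀ i, a' i = if h - v ≤ i ∧ i ≤ h then b i else a i) :
    tailS r j a' = tailS r j a - colE h v a b := by
  have e1 := sum_block (A := j + 1) (r := r) (lo := h - v) (hi := h) hj hhr
    (fun _ x => (x : ℤ)) a b a' ha'
  have hz : (∑ i ∈ Finset.Icc (h - v) h, ((b i : ℤ) - (a i : ℤ)))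
      = - colE h v a b := by
    unfold colE
    rw [← Finset.sum_neg_distrib]
    exact Finset.sum_congr rfl fun i _ => by ring
  unfold tailS
  rw [e1]
  linarith

lemma col_tailS_b (hhs : h ≤ s) (j : ℕ) (hj : j + 1 ≤ h - v)
    (hb' : ∀ i, b' i = if h - v ≤ i ∧ i ≤ h then a i else b i) :
    tailS s j b' = tailS s j b + colE h v a b := by
  have e2 := sum_block (A := j + 1) (r := s) (lo := h - v) (hi := h) hj hhs
    (fun _ x => (x : ℤ)) b a b' hb'
  unfold tailS colE
  rw [e2]

lemma col_E_pos (hh : 1 ≤ h) (hv : v ≤ h - 1)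
    (hrun : ∀ i, i ≤ v → b (h - i) < a (h - i)) : 0 < colE h v a b := by
  unfold colE
  refine Finset.sum_pos (fun i hi => ?_) ⟨h, by simp only [Finset.mem_Icc]; omega⟩
  simp only [Finset.mem_Icc] at hi
  have := hrun (h - i) (by omega)
  have hieq : h - (h - i) = i := by omega
  rw [hieq] at this
  have : (b i : ℤ) < (a i : ℤ) := by exact_mod_cast this
  linarith

lemma col_low (j : ℕ) (hj : j < h - v)
    (ha' : ∀ i, a' i = if h - v ≤ i ∧ i ≤ h then b i else a i)
    (hb' : ∀ i, b' i = if h - v ≤ i ∧ i ≤ h then a i else b i) :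
    a' j = a j ∧ b' j = b j := by
  constructor
  · rw [ha' j, if_neg (by omega)]
  · rw [hb' j, if_neg (by omega)]

end ColMove

section DiagMove

variable {r s h k v : ℕ} {a b a' b' : ℕ → ℕ}

lemma diag_posS (hh : 1 ≤ h) (hk : h + 1 ≤ k) (hv : v ≤ h - 1) (hhr : h ≤ r) (hks : k ≤ s)
    (hrun : ∀ i, i ≤ v → b (k - i) < a (h - i))
    (ha' : ∀ i, a' i = if h - v ≤ i ∧ i ≤ h then b (i + k - h) else a i)
    (hb' : ∀ i, b' i = if k - v ≤ i ∧ i ≤ k then a (i + h - k) else b i) :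
    posS r a + posS s b < posS r a' + posS s b' := by
  have hc : k = h + (k - h) := by omega
  set c := k - h with hcdef
  have hc1 : 1 ≤ c := by omega
  have e1 := sum_block (A := 1) (r := r) (lo := h - v) (hi := h) (by omega) hhr
    (fun i x => (i : ℤ) * x) a (fun i => b (i + k - h)) a' ha'
  have e2 := sum_block (A := 1) (r := s) (lo := k - v) (hi := k) (by omega) hks
    (fun i x => (i : ℤ) * x) b (fun i => a (i + h - k)) b' hb'
  have hib : Finset.Icc (k - v) k = Finset.Icc ((h - v) + c) (h + c) := by
    congr 1 <;> omega
  rw [hib, sum_shift] at e2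
  have combo : (∑ i ∈ Finset.Icc (h - v) h,
        ((i : ℤ) * (b (i + k - h) : ℤ) - (i : ℤ) * (a i : ℤ)))
      + ∑ j ∈ Finset.Icc (h - v) h,
        (((j + c : ℕ) : ℤ) * (a (j + c + h - k) : ℤ) - ((j + c : ℕ) : ℤ) * (b (j + c) : ℤ))
      = ∑ j ∈ Finset.Icc (h - v) h, (c : ℤ) * ((a j : ℤ) - (b (j + c) : ℤ)) := by
    rw [← Finset.sum_add_distrib]
    refine Finset.sum_congr rfl fun j hj => ?_
    simp only [Finset.mem_Icc] at hj
    have n1 : j + k - h = j + c := by omega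
    have n2 : j + c + h - k = j := by omega
    rw [n1, n2]
    push_cast
    ring
  have hpos : 0 < ∑ j ∈ Finset.Icc (h - v) h, (c : ℤ) * ((a j : ℤ) - (b (j + c) : ℤ)) := by
    refine Finset.sum_pos (fun j hj => ?_) ⟨h, by simp only [Finset.mem_Icc]; omega⟩
    simp only [Finset.mem_Icc] at hj
    have hlt := hrun (h - j) (by omega)
    have n1 : h - (h - j) = j := by omega
    have n2 : k - (h - j) = j + c := by omega
    rw [n1, n2] at hlt
    have hlt' : (b (j + c) : ℤ) < (a j : ℤ) := by exact_mod_cast hlt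
    have hc1' : (0 : ℤ) < (c : ℤ) := by exact_mod_cast hc1
    nlinarith
  have key : posS r a' + posS s b' = posS r a + posS s b
      + ∑ j ∈ Finset.Icc (h - v) h, (c : ℤ) * ((a j : ℤ) - (b (j + c) : ℤ)) := by
    unfold posS
    rw [e1, e2, ← combo]
    ring
  linarith

end DiagMove

end Stmt15Aux
namespace Stmt15Aux

/-- The weight vector of the monomial `z_{σ,a} z_{γ,b}` for a pair of chains. -/
def Mz (n : ℕ) (σ γ : ℕ × ℕ) (r s : ℕ) (p : (ℕ → ℕ) × (ℕ → ℕ)) : ℕ →₀ ℤ :=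
  gz n (σ, r, p.1) + gz n (γ, s, p.2)

section MzApply

variable (n : ℕ) (σ γ : ℕ × ℕ) (r s : ℕ) (p : (ℕ → ℕ) × (ℕ → ℕ))

lemma Mz_apply0 : Mz n σ γ r s p 0 = 2 := by
  rw [Mz, Finsupp.add_apply, gz_apply0, gz_apply0]; norm_num

lemma Mz_apply1 : Mz n σ γ r s p 1 = 0 := by
  rw [Mz, Finsupp.add_apply, gz_apply1, gz_apply1]; norm_num

lemma Mz_apply2 : Mz n σ γ r s p 2 = -(posS r p.1) + -(posS s p.2) := by
  rw [Mz, Finsupp.add_apply, gz_apply2, gz_apply2]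

lemma Mz_apply3 : Mz n σ γ r s p 3
    = (labelRank n σ : ℤ) * entS r p.1 + (labelRank n γ : ℤ) * entS s p.2 := by
  rw [Mz, Finsupp.add_apply, gz_apply3, gz_apply3]

lemma Mz_apply4 : Mz n σ γ r s p 4 = (r : ℤ) * entS r p.1 + (s : ℤ) * entS s p.2 := by
  rw [Mz, Finsupp.add_apply, gz_apply4, gz_apply4]

lemma Mz_apply5 (j : ℕ) : Mz n σ γ r s p (5 + j)
    = (if 1 ≤ j ∧ j ≤ r then -((p.1 j : ℤ) * tailS r j p.1) else 0)
      + (if 1 ≤ j ∧ j ≤ s then -((p.2 j : ℤ) * tailS s j p.2) else 0) := by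
  rw [Mz, Finsupp.add_apply, gz_apply5j, gz_apply5j]

end MzApply

lemma omegaD'_le_r (Δ r s : ℕ) : omegaD' Δ r s ≤ r := by
  unfold omegaD'; split_ifs <;> omega

lemma omegaC'_le_r (Δ r s : ℕ) : omegaC' Δ r s ≤ r := by
  unfold omegaC'; split_ifs <;> omega

lemma omegaC'_le_s (Δ r s : ℕ) : omegaC' Δ r s ≤ s := by
  unfold omegaC'; split_ifs <;> omega

lemma omegaAD'_le_s (Δ r s : ℕ) : omegaAD' Δ r s ≤ s := by
  unfold omegaAD'; split_ifs <;> omega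

/-- Normalized data of a column move. -/
def ColData (r s : ℕ) (p q : (ℕ → ℕ) × (ℕ → ℕ)) : Prop :=
  ∃ h v : ℕ, 1 ≤ h ∧ v ≤ h - 1 ∧ h ≤ r ∧ h ≤ s ∧
    (∀ i, i ≤ v → p.2 (h - i) < p.1 (h - i)) ∧
    (∀ i, q.1 i = if h - v ≤ i ∧ i ≤ h then p.2 i else p.1 i) ∧
    (∀ i, q.2 i = if h - v ≤ i ∧ i ≤ h then p.1 i else p.2 i)

/-- Any labeled-chain move either strictly decreases coordinate 2 of the weight,
or is a column move. -/
lemma move_cases {n : ℕ} {σ γ : ℕ × ℕ} {r s : ℕ} {p q : (ℕ → ℕ) × (ℕ → ℕ)}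
    (hstep : MoveL n σ γ r s p.1 p.2 q.1 q.2) :
    Mz n σ γ r s q 2 < Mz n σ γ r s p 2 ∨ ColData r s p q := by
  rcases hstep with hd | hc | had
  · left
    obtain ⟨h, k, v, hh, hd', hk, hks, _, _, hv, hrun, _, ha', hb'⟩ := hd
    have hhr : h ≤ r := le_trans hd' (omegaD'_le_r _ _ _)
    have := diag_posS hh hk hv hhr hks hrun ha' hb'
    rw [Mz_apply2, Mz_apply2]
    linarith
  · right
    obtain ⟨h, v, hh, hc', hba, _, hv, hrun, _, ha', hb'⟩ := hc
    exact ⟨h, v, hh, hv, le_trans hc' (omegaC'_le_r _ _ _),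
      le_trans hc' (omegaC'_le_s _ _ _), hrun, ha', hb'⟩
  · left
    obtain ⟨h, k, v, hh, had', hk, hkr, _, _, hv, hrun, _, ha', hb'⟩ := had
    have hhs : h ≤ s := le_trans had' (omegaAD'_le_s _ _ _)
    have := diag_posS hh hk hv hhs hkr hrun hb' ha'
    rw [Mz_apply2, Mz_apply2]
    linarith

/-- Column moves preserve coordinate 2. -/
lemma col_coord2 {n : ℕ} {σ γ : ℕ × ℕ} {r s : ℕ} {p q : (ℕ → ℕ) × (ℕ → ℕ)}
    (hcd : ColData r s p q) : Mz n σ γ r s q 2 = Mz n σ γ r s p 2 := by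
  obtain ⟨h, v, hh, hv, hhr, hhs, hrun, ha', hb'⟩ := hcd
  have := col_posS hh hv hhr hhs ha' hb'
  rw [Mz_apply2, Mz_apply2]
  linarith

/-- Column moves where the two labels differ (case A): the weight drops at
coordinate 3. -/
lemma col_lex_A {n : ℕ} {σ γ : ℕ × ℕ} {r s : ℕ} {p q : (ℕ → ℕ) × (ℕ → ℕ)}
    (hrank : labelRank n γ < labelRank n σ) (hcd : ColData r s p q) :
    toLex (Mz n σ γ r s q) < toLex (Mz n σ γ r s p) := by
  obtain ⟨h, v, hh, hv, hhr, hhs, hrun, ha', hb'⟩ := hcd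
  have hE := col_E_pos hh hv hrun
  have hEa := col_entS_a (b := p.2) hh hv hhr ha'
  have hEb := col_entS_b (a := p.1) hh hv hhs hb'
  refine lexlt_of 3 ?_ ?_
  · intro j hj
    interval_cases j
    · rw [Mz_apply0, Mz_apply0]
    · rw [Mz_apply1, Mz_apply1]
    · exact col_coord2 ⟨h, v, hh, hv, hhr, hhs, hrun, ha', hb'⟩
  · rw [Mz_apply3, Mz_apply3, hEa, hEb]
    have hrank' : (labelRank n γ : ℤ) < (labelRank n σ : ℤ) := by exact_mod_cast hrank
    nlinarith

/-- Column moves with equal labels and `s < r` (case B1): the weight drops at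
coordinate 4. -/
lemma col_lex_B1 {n : ℕ} {σ γ : ℕ × ℕ} {r s : ℕ} {p q : (ℕ → ℕ) × (ℕ → ℕ)}
    (hσγ : σ = γ) (hsr : s < r) (hcd : ColData r s p q) :
    toLex (Mz n σ γ r s q) < toLex (Mz n σ γ r s p) := by
  obtain ⟨h, v, hh, hv, hhr, hhs, hrun, ha', hb'⟩ := hcd
  have hE := col_E_pos hh hv hrun
  have hEa := col_entS_a (b := p.2) hh hv hhr ha'
  have hEb := col_entS_b (a := p.1) hh hv hhs hb'
  refine lexlt_of 4 ?_ ?_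
  · intro j hj
    interval_cases j
    · rw [Mz_apply0, Mz_apply0]
    · rw [Mz_apply1, Mz_apply1]
    · exact col_coord2 ⟨h, v, hh, hv, hhr, hhs, hrun, ha', hb'⟩
    · rw [Mz_apply3, Mz_apply3, hEa, hEb, hσγ]
      ring
  · rw [Mz_apply4, Mz_apply4, hEa, hEb]
    have hsr' : (s : ℤ) < (r : ℤ) := by exact_mod_cast hsr
    nlinarith

end Stmt15Aux
namespace Stmt15Aux

/-- Bottom-lexicographic comparison of the two chains of a pair. -/
def Vp (r : ℕ) (p : (ℕ → ℕ) × (ℕ → ℕ)) : Prop :=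
  ∀ j, 1 ≤ j → j ≤ r → (∀ j', 1 ≤ j' → j' ≤ r → j' < j → p.1 j' = p.2 j') → p.1 j ≤ p.2 j

/-- Column moves with equal labels and lengths (case B2), from a state satisfying
the invariant `Vp`: the weight drops at some coordinate `5 + j₀`, and the
invariant is preserved. -/
lemma col_lex_V {n : ℕ} {σ γ : ℕ × ℕ} {r s : ℕ} {p q : (ℕ → ℕ) × (ℕ → ℕ)}
    (hσγ : σ = γ) (hsr : s = r) (hcd : ColData r s p q) (hV : Vp r p) :
    toLex (Mz n σ γ r s q) < toLex (Mz n σ γ r s p) ∧ Vp r q := by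
  classical
  subst hsr
  obtain ⟨h, v, hh, hv, hhr, hhs, hrun, ha', hb'⟩ := hcd
  have hE := col_E_pos hh hv hrun
  have hEa := col_entS_a (b := p.2) hh hv hhr ha'
  have hEb := col_entS_b (a := p.1) hh hv hhs hb'
  have hPex : ∃ j, 1 ≤ j ∧ j ≤ s ∧ p.1 j ≠ p.2 j := by
    refine ⟨h - v, by omega, by omega, ?_⟩
    have := hrun v le_rfl
    omega
  set j₀ := Nat.find hPex with hj₀def
  obtain ⟨hj₀1, hj₀r, hj₀ne⟩ := Nat.find_spec hPex
  have hmin : ∀ j', 1 ≤ j' → j' ≤ s → j' < j₀ → p.1 j' = p.2 j' := by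
    intro j' h1 h2 h3
    have := Nat.find_min hPex h3
    push_neg at this
    exact this h1 h2
  have hle : p.1 j₀ ≤ p.2 j₀ := hV j₀ hj₀1 hj₀r hmin
  have hlt : p.1 j₀ < p.2 j₀ := lt_of_le_of_ne hle hj₀ne
  have hj₀blk : j₀ < h - v := by
    have h1 : j₀ ≤ h - v := Nat.find_min' hPex ⟨by omega, by omega, by
      have := hrun v le_rfl
      omega⟩
    rcases lt_or_eq_of_le h1 with h2 | h2
    · exact h2
    · exfalso
      have := hrun v le_rfl
      rw [h2] at hlt
      omega
  have hcd' : ColData s s p q := ⟨h, v, hh, hv, hhr, hhs, hrun, ha', hb'⟩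
  constructor
  · refine lexlt_of (5 + j₀) ?_ ?_
    · intro cc hcc
      rcases Nat.lt_or_ge cc 5 with h5 | h5
      · interval_cases cc
        · rw [Mz_apply0, Mz_apply0]
        · rw [Mz_apply1, Mz_apply1]
        · exact col_coord2 hcd'
        · rw [Mz_apply3, Mz_apply3, hEa, hEb, hσγ]
          ring
        · rw [Mz_apply4, Mz_apply4, hEa, hEb]
          ring
      · obtain ⟨j, rfl⟩ : ∃ j, cc = 5 + j := ⟨cc - 5, by omega⟩
        have hjj₀ : j < j₀ := by omega
        rw [Mz_apply5, Mz_apply5]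
        by_cases h1j : 1 ≤ j
        · have hjs : j ≤ s := by omega
          rw [if_pos ⟨h1j, hjs⟩, if_pos ⟨h1j, hjs⟩, if_pos ⟨h1j, hjs⟩, if_pos ⟨h1j, hjs⟩]
          have hjblk : j < h - v := by omega
          obtain ⟨hq1, hq2⟩ := col_low (a := p.1) (b := p.2) j hjblk ha' hb'
          have ht1 := col_tailS_a (b := p.2) hhr j (by omega) ha'
          have ht2 := col_tailS_b (a := p.1) hhs j (by omega) hb'
          rw [hq1, hq2, ht1, ht2, hmin j h1j hjs hjj₀]
          ring
        · rw [if_neg (by omega), if_neg (by omega), if_neg (by omega), if_neg (by omega)]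
    · rw [Mz_apply5, Mz_apply5, if_pos ⟨hj₀1, hj₀r⟩, if_pos ⟨hj₀1, hj₀r⟩,
        if_pos ⟨hj₀1, hj₀r⟩, if_pos ⟨hj₀1, hj₀r⟩]
      obtain ⟨hq1, hq2⟩ := col_low (a := p.1) (b := p.2) j₀ hj₀blk ha' hb'
      have ht1 := col_tailS_a (b := p.2) hhr j₀ (by omega) ha'
      have ht2 := col_tailS_b (a := p.1) hhs j₀ (by omega) hb'
      rw [hq1, hq2, ht1, ht2]
      have hlt' : (p.1 j₀ : ℤ) < (p.2 j₀ : ℤ) := by exact_mod_cast hlt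
      nlinarith
  · intro j h1 h2 hpre
    have hjj₀ : j ≤ j₀ := by
      by_contra hcon
      push_neg at hcon
      have := hpre j₀ hj₀1 (by omega) hcon
      obtain ⟨hq1, hq2⟩ := col_low (a := p.1) (b := p.2) j₀ hj₀blk ha' hb'
      rw [hq1, hq2] at this
      omega
    obtain ⟨hq1, hq2⟩ := col_low (a := p.1) (b := p.2) j (by omega) ha' hb'
    rw [hq1, hq2]
    rcases lt_or_eq_of_le hjj₀ with hcase | hcase
    · rw [hmin j h1 h2 hcase]
    · subst hcase
      exact hle

end Stmt15Aux
namespace Stmt15Aux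

lemma lexlt_of_nat {α : Type*} [LinearOrder α] {u v : α →₀ ℕ} (i : α)
    (hbelow : ∀ j, j < i → u j = v j) (hlt : u i < v i) : toLex u < toLex v :=
  Finsupp.Lex.lt_iff.mpr ⟨i, hbelow, hlt⟩

lemma chain_strict_mono {r : ℕ} {u : ℕ → ℕ} (hc : IsChainOn r u) :
    ∀ i j, 1 ≤ i → i < j → j ≤ r → u i < u j := by
  intro i j h1 hij hj
  induction j with
  | zero => omega
  | succ m ih =>
    rcases Nat.lt_or_ge i m with him | him
    · have h1' : u i < u m := ih (by omega) (by omega)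
      have h2' : u m + 1 < u (m + 1) := hc m (by omega) (by omega)
      omega
    · have him' : i = m := by omega
      subst him'
      have := hc i h1 (by omega)
      omega

lemma chainExp_apply (r : ℕ) (x : ℕ → ℕ) (t : ℕ) :
    (chainExp r x) t = ∑ i ∈ Finset.Icc 1 r, (if x i = t then 1 else 0) := by
  rw [chainExp, Finsupp.finset_sum_apply]
  exact Finset.sum_congr rfl fun i _ => Finsupp.single_apply

/-- `expDeg` as an additive monoid homomorphism. -/
def expDegHom : (ℕ →₀ ℕ) →+ ℕ where
  toFun u := u.sum fun _ e => e
  map_zero' := by simp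
  map_add' f g := by
    show (f + g).sum (fun _ e => e) = f.sum (fun _ e => e) + g.sum (fun _ e => e)
    exact Finsupp.sum_add_index' (fun _ => rfl) (fun _ _ _ => rfl)

lemma expDeg_chainExp (r : ℕ) (x : ℕ → ℕ) : expDeg (chainExp r x) = r := by
  have h1 : expDeg (chainExp r x) = expDegHom (chainExp r x) := by
    rfl
  rw [h1, chainExp, map_sum]
  have h2 : ∀ i ∈ Finset.Icc 1 r, expDegHom (Finsupp.single (x i) 1) = 1 := by
    intro i _
    show ((Finsupp.single (x i) 1).sum fun _ e => e) = 1
    rw [Finsupp.sum_single_index rfl]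
  rw [Finset.sum_congr rfl h2, Finset.sum_const, smul_eq_mul, mul_one, Nat.card_Icc]
  omega

lemma V_init {r : ℕ} {a b : ℕ → ℕ} (hca : IsChainOn r a) (hcb : IsChainOn r b)
    (hcond : chainExp r b = chainExp r a ∨ DegLexLt (chainExp r b) (chainExp r a)) :
    Vp r (a, b) := by
  intro j h1 hjr hpre
  have hpre' : ∀ j', 1 ≤ j' → j' ≤ r → j' < j → a j' = b j' := hpre
  show a j ≤ b j
  by_contra hcon
  push_neg at hcon
  have hcon' : b j < a j := hcon
  have hltx : toLex (chainExp r a) < toLex (chainExp r b) := by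
    refine lexlt_of_nat (b j) ?_ ?_
    · intro t ht
      rw [chainExp_apply, chainExp_apply]
      refine Finset.sum_congr rfl fun i hi => ?_
      simp only [Finset.mem_Icc] at hi
      rcases lt_trichotomy i j with hij | hij | hij
      · rw [hpre' i hi.1 hi.2 hij]
      · subst hij
        rw [if_neg (by omega), if_neg (by omega)]
      · have hai : a j < a i := chain_strict_mono hca j i h1 hij hi.2
        have hbi : b j < b i := chain_strict_mono hcb j i h1 hij hi.2
        rw [if_neg (by omega), if_neg (by omega)]
    · rw [chainExp_apply, chainExp_apply]
      have hzero : ∑ i ∈ Finset.Icc 1 r, (if a i = b j then 1 else 0) = 0 := by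
        refine Finset.sum_eq_zero fun i hi => ?_
        simp only [Finset.mem_Icc] at hi
        rcases lt_trichotomy i j with hij | hij | hij
        · have : a i = b i := hpre' i hi.1 hi.2 hij
          have : b i < b j := chain_strict_mono hcb i j hi.1 hij hjr
          rw [if_neg (by omega)]
        · subst hij
          rw [if_neg (by omega)]
        · have : a j < a i := chain_strict_mono hca j i h1 hij hi.2
          rw [if_neg (by omega)]
      rw [hzero]
      have hone : (1 : ℕ) ≤ ∑ i ∈ Finset.Icc 1 r, (if b i = b j then 1 else 0) := by
        have hjm : j ∈ Finset.Icc 1 r := by simp only [Finset.mem_Icc]; omega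
        have := Finset.single_le_sum (f := fun i => if b i = b j then 1 else 0)
          (fun i _ => Nat.zero_le _) hjm
        simpa using this
      omega
  rcases hcond with heq | hdlt
  · rw [heq] at hltx
    exact lt_irrefl _ hltx
  · rcases hdlt with hdeg | ⟨_, hlex⟩
    · rw [expDeg_chainExp, expDeg_chainExp] at hdeg
      omega
    · exact lt_asymm hlex hltx

end Stmt15Aux
namespace Stmt15Aux

/-- The main invariant-propagation lemma for pairs of labeled chains. -/
lemma clause4 (n : ℕ) (σ γ : ℕ × ℕ) (r s : ℕ) (a b c d : ℕ → ℕ)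
    (hA : LabeledChain n σ r a) (hB : LabeledChain n γ s b)
    (hGec : GeC n σ r a γ s b)
    (hreach : Relation.ReflTransGen
      (fun p q : (ℕ → ℕ) × (ℕ → ℕ) => MoveL n σ γ r s p.1 p.2 q.1 q.2) (a, b) (c, d)) :
    (c, d) = (a, b) ∨ toLex (Mz n σ γ r s (c, d)) < toLex (Mz n σ γ r s (a, b)) := by
  have hcase : labelRank n γ < labelRank n σ ∨ (σ = γ ∧ s < r) ∨
      (σ = γ ∧ s = r ∧ (chainExp s b = chainExp r a ∨
        DegLexLt (chainExp s b) (chainExp r a))) := by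
    rcases hGec with h | ⟨he, hch⟩
    · exact Or.inl h
    · right
      have hsr : s ≤ r := by
        rcases hch with heq | hdl
        · have := congrArg expDeg heq
          rw [expDeg_chainExp, expDeg_chainExp] at this
          omega
        · rcases hdl with hdeg | ⟨hdeg, _⟩
          · rw [expDeg_chainExp, expDeg_chainExp] at hdeg
            omega
          · rw [expDeg_chainExp, expDeg_chainExp] at hdeg
            omega
      rcases lt_or_eq_of_le hsr with hlt | heq
      · exact Or.inl ⟨he, hlt⟩
      · exact Or.inr ⟨he, heq, hch⟩
  have main : ∀ e, Relation.ReflTransGen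
      (fun p q : (ℕ → ℕ) × (ℕ → ℕ) => MoveL n σ γ r s p.1 p.2 q.1 q.2) (a, b) e →
      e = (a, b) ∨ (toLex (Mz n σ γ r s e) < toLex (Mz n σ γ r s (a, b)) ∧
        Mz n σ γ r s e 2 ≤ Mz n σ γ r s (a, b) 2 ∧
        (Mz n σ γ r s e 2 = Mz n σ γ r s (a, b) 2 → σ = γ → s = r → Vp r e)) := by
    intro e he
    induction he with
    | refl => exact Or.inl rfl
    | @tail p e hsteps hstep ih =>
      right
      have hp2 : Mz n σ γ r s p 2 ≤ Mz n σ γ r s (a, b) 2 := by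
        rcases ih with rfl | ⟨_, h, _⟩
        · exact le_rfl
        · exact h
      rcases move_cases hstep with h2 | hcd
      · -- a diagonal or anti-diagonal step: coordinate 2 drops
        refine ⟨?_, by linarith, fun heq _ _ => absurd heq (by linarith)⟩
        refine lexlt_of 2 ?_ (by linarith)
        intro j hj
        interval_cases j
        · rw [Mz_apply0, Mz_apply0]
        · rw [Mz_apply1, Mz_apply1]
      · -- a column step
        have h2eq : Mz n σ γ r s e 2 = Mz n σ γ r s p 2 := col_coord2 hcd
        rcases hcase with hr | ⟨hσγ, hsr⟩ | ⟨hσγ, hsr, hch⟩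
        · have hlex := col_lex_A (n := n) hr hcd
          have hnV : ∀ P : Prop, σ = γ → P := by
            intro P hσγ'
            rw [hσγ'] at hr
            exact absurd hr (lt_irrefl _)
          rcases ih with rfl | ⟨hplex, hple2, _⟩
          · exact ⟨hlex, by rw [h2eq], fun _ hσγ' _ => hnV _ hσγ'⟩
          · exact ⟨lt_trans hlex hplex, by rw [h2eq]; exact hple2,
              fun _ hσγ' _ => hnV _ hσγ'⟩
        · have hlex := col_lex_B1 (n := n) hσγ hsr hcd
          rcases ih with rfl | ⟨hplex, hple2, _⟩
          · exact ⟨hlex, by rw [h2eq], fun _ _ hsr' => absurd hsr' (by omega)⟩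
          · exact ⟨lt_trans hlex hplex, by rw [h2eq]; exact hple2,
              fun _ _ hsr' => absurd hsr' (by omega)⟩
        · rcases ih with rfl | ⟨hplex, hple2, hpV⟩
          · have hV : Vp r (a, b) := by
              subst hsr
              exact V_init hA.2.2.1 hB.2.2.1 hch
            obtain ⟨hlex, hVq⟩ := col_lex_V (n := n) hσγ hsr hcd hV
            exact ⟨hlex, by rw [h2eq], fun _ _ _ => hVq⟩
          · rcases eq_or_lt_of_le hple2 with heq2 | hlt2
            · have hV : Vp r p := hpV heq2 hσγ hsr
              obtain ⟨hlex, hVq⟩ := col_lex_V (n := n) hσγ hsr hcd hV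
              exact ⟨lt_trans hlex hplex, by rw [h2eq]; exact hple2, fun _ _ _ => hVq⟩
            · refine ⟨?_, by rw [h2eq]; exact hple2,
                fun heq _ _ => absurd heq (by rw [h2eq]; exact ne_of_lt hlt2)⟩
              refine lexlt_of 2 ?_ (by rw [h2eq]; exact hlt2)
              intro j hj
              interval_cases j
              · rw [Mz_apply0, Mz_apply0]
              · rw [Mz_apply1, Mz_apply1]
  rcases main (c, d) hreach with h | ⟨h, _, _⟩
  · exact Or.inl h
  · exact Or.inr h

/-- The weight vector of the monomial `x_i z_{σ,a}`. -/
def Mx (n : ℕ) (σ : ℕ × ℕ) (r : ℕ) (e : ℕ × (ℕ → ℕ)) : ℕ →₀ ℤ :=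
  gx e.1 + gz n (σ, r, e.2)

lemma Mx_apply0 (n : ℕ) (σ : ℕ × ℕ) (r : ℕ) (e : ℕ × (ℕ → ℕ)) : Mx n σ r e 0 = 2 := by
  rw [Mx, Finsupp.add_apply, gx_apply0, gz_apply0]; norm_num

lemma Mx_apply1 (n : ℕ) (σ : ℕ × ℕ) (r : ℕ) (e : ℕ × (ℕ → ℕ)) : Mx n σ r e 1 = (e.1 : ℤ) := by
  rw [Mx, Finsupp.add_apply, gx_apply1, gz_apply1, add_zero]

lemma clause5 (n : ℕ) (σ : ℕ × ℕ) (r : ℕ) (i : ℕ) (a : ℕ → ℕ) :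
    ∀ e, Relation.ReflTransGen (XZMove σ r) (i, a) e →
      e = (i, a) ∨ toLex (Mx n σ r e) < toLex (Mx n σ r (i, a)) := by
  intro e he
  induction he with
  | refl => exact Or.inl rfl
  | @tail p e hsteps hstep ih =>
    right
    obtain ⟨t, _, _, hlt, _, _, hq1, _⟩ := hstep
    have hstep' : toLex (Mx n σ r e) < toLex (Mx n σ r p) := by
      refine lexlt_of 1 ?_ ?_
      · intro j hj
        have : j = 0 := by omega
        subst this
        rw [Mx_apply0, Mx_apply0]
      · rw [Mx_apply1, Mx_apply1, hq1]
        exact_mod_cast hlt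
    rcases ih with rfl | hplex
    · exact hstep'
    · exact lt_trans hstep' hplex

end Stmt15Aux

namespace Stmt15Aux

lemma LTm_of_G_lt (n : ℕ) {p q : MonR} (h : toLex (G n p) < toLex (G n q)) : LTm n p q := by
  unfold LTm phi
  rw [Prod.Lex.lt_iff]
  left
  exact h

end Stmt15Aux
/-- the set `G` of marked binomials (non-standard quadratic monomial
minus its standard form, the non-standard one marked) is marked coherently: there is
a term order `lt` on the monomials of `R` for which each marked (non-standard)
monomial is the leading term of its binomial. -/
theorem stmt15 (n : ℕ) (hn : 2 ≤ n) :
    ∃ lt : MonR → MonR → Prop,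
      IsStrictTotalOrder MonR lt ∧
      (∀ m : MonR, m ≠ 0 → lt 0 m) ∧
      (∀ p q w : MonR, lt p q → lt (p + w) (q + w)) ∧
      (∀ (σ γ : ℕ × ℕ) (r s : ℕ) (a b c d : ℕ → ℕ),
        LabeledChain n σ r a → LabeledChain n γ s b → GeC n σ r a γ s b →
        ¬ StdPairL n σ γ r s a b →
        Relation.ReflTransGen
          (fun p q : (ℕ → ℕ) × (ℕ → ℕ) => MoveL n σ γ r s p.1 p.2 q.1 q.2)
          (a, b) (c, d) →
        StdPairL n σ γ r s c d →
        lt (zMon σ r c + zMon γ s d) (zMon σ r a + zMon γ s b)) ∧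
      (∀ (σ : ℕ × ℕ) (r : ℕ) (a c : ℕ → ℕ) (i j : ℕ),
        LabeledChain n σ r a → ¬ XZStd i σ r a →
        Relation.ReflTransGen (XZMove σ r) (i, a) (j, c) →
        XZStd j σ r c →
        lt (xMon j + zMon σ r c) (xMon i + zMon σ r a)) := by
  classical
  refine ⟨Stmt15Aux.LTm n, Stmt15Aux.LTm_sto n, Stmt15Aux.LTm_zero_lt n,
    Stmt15Aux.LTm_add n, ?_, ?_⟩
  · intro σ γ r s a b c d hA hB hGec hNstd hreach hstd
    rcases Stmt15Aux.clause4 n σ γ r s a b c d hA hB hGec hreach with heq | hlex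
    · exfalso
      have hc : c = a := congrArg Prod.fst heq
      have hd : d = b := congrArg Prod.snd heq
      rw [hc, hd] at hstd
      exact hNstd hstd
    · refine Stmt15Aux.LTm_of_G_lt n ?_
      rw [Stmt15Aux.G_zz, Stmt15Aux.G_zz]
      have e1 : Stmt15Aux.Mz n σ γ r s (c, d)
          = Stmt15Aux.gz n (σ, r, c) + Stmt15Aux.gz n (γ, s, d) := rfl
      have e2 : Stmt15Aux.Mz n σ γ r s (a, b)
          = Stmt15Aux.gz n (σ, r, a) + Stmt15Aux.gz n (γ, s, b) := rfl
      rw [e1, e2] at hlex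
      exact hlex
  · intro σ r a c i j hA hNstd hreach hstd
    rcases Stmt15Aux.clause5 n σ r i a (j, c) hreach with heq | hlex
    · exfalso
      have hj : j = i := congrArg Prod.fst heq
      have hc : c = a := congrArg Prod.snd heq
      rw [hj, hc] at hstd
      exact hNstd hstd
    · refine Stmt15Aux.LTm_of_G_lt n ?_
      rw [Stmt15Aux.G_xz, Stmt15Aux.G_xz]
      have e1 : Stmt15Aux.Mx n σ r (j, c) = Stmt15Aux.gx j + Stmt15Aux.gz n (σ, r, c) := rfl
      have e2 : Stmt15Aux.Mx n σ r (i, a) = Stmt15Aux.gx i + Stmt15Aux.gz n (σ, r, a) := rfl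
      rw [e1, e2] at hlex
      exact hlex


end
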